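/- Let A be an n×n Hermitian matrix with an equitable partition π with m cells. Then the quotient matrix B = SᵀAS is Hermitian, and its (j,k)-entry equals √(|r_{jk}|·|c_{jk}|)·e^{iΘ}, where r_{jk} and c_{jk} are the constant row and column sums of A[V_j,V_k] and Θ = Arg(r_{jk}) = Arg(c_{jk}). -/

import Mathlib

open Matrix Finset

lemma sqrt_div_mul_div {a b : ℝ} (ha : 0 < a) (hb : 0 < b) :
    Real.sqrt (b / a) * (a / b) = Real.sqrt (a / b) := by
  have hs : 0 < Real.sqrt (a / b) := Real.sqrt_pos.mpr (div_pos ha hb)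
  have h := Real.mul_self_sqrt (le_of_lt (div_pos ha hb))
  rw [← inv_div a b, Real.sqrt_inv]
  nth_rewrite 2 [← h]
  rw [inv_mul_cancel_left₀ hs.ne']

/-- the quotient matrix `B = SᵀAS` of an equitable partition of a Hermitian
matrix is Hermitian, its `(j,k)` entry is `√(|r_{jk}|·|c_{jk}|)·e^{iΘ}` where `r_{jk}` and
`c_{jk}` are the constant row and column sums of `A[V_j,V_k]`, and
`Θ = Arg(r_{jk}) = Arg(c_{jk})`. -/
theorem stmt9 {n m : ℕ} (A : Matrix (Fin n) (Fin n) ℂ) (hA : A.IsHermitian)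
    (f : Fin n → Fin m) (hf : Function.Surjective f)
    (S : Matrix (Fin n) (Fin m) ℂ)
    (hS : ∀ j k, S j k =
      if f j = k then ((1 / Real.sqrt ((univ.filter fun x => f x = k).card) : ℝ) : ℂ) else 0)
    (r c : Fin m → Fin m → ℂ)
    (hr : ∀ j k, ∀ x : Fin n, f x = j → ∑ y ∈ univ.filter (fun y => f y = k), A x y = r j k)
    (hc : ∀ j k, ∀ y : Fin n, f y = k → ∑ x ∈ univ.filter (fun x => f x = j), A x y = c j k) :
    (S.transpose * A * S).IsHermitian ∧
    ∀ j k : Fin m,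
      (S.transpose * A * S) j k =
        ((Real.sqrt (‖r j k‖ * ‖c j k‖) : ℝ) : ℂ) *
          Complex.exp (Complex.I * ((r j k).arg : ℂ)) ∧
      (r j k).arg = (c j k).arg := by
  classical
  set N : Fin m → ℕ := fun k => (univ.filter fun x => f x = k).card with hN
  have hNpos : ∀ k, 0 < N k := by
    intro k
    obtain ⟨x, hx⟩ := hf k
    exact Finset.card_pos.mpr ⟨x, by simp [hx]⟩
  have hNpos' : ∀ k, (0 : ℝ) < (N k : ℝ) := fun k => by exact_mod_cast hNpos k
  have hsq : ∀ k, (0 : ℝ) < Real.sqrt (N k) := fun k => Real.sqrt_pos.mpr (hNpos' k)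
  -- entry formula as a double sum
  have key : ∀ j k, (S.transpose * A * S) j k =
      ((1 / Real.sqrt (N j) : ℝ) : ℂ) * ((1 / Real.sqrt (N k) : ℝ) : ℂ) *
        ∑ x ∈ univ.filter (fun x => f x = j), ∑ y ∈ univ.filter (fun y => f y = k), A x y := by
    intro j k
    simp only [Matrix.mul_apply, Matrix.transpose_apply, hS, ite_mul, zero_mul, mul_ite,
      mul_zero, ← Finset.sum_filter]
    rw [Finset.sum_comm (f := fun x y => A x y)]
    simp [Finset.mul_sum, Finset.sum_mul, mul_comm, mul_left_comm, mul_assoc, hN]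
  -- the double sum equals N j * r j k and N k * c j k
  have hsum_r : ∀ j k, (∑ x ∈ univ.filter (fun x => f x = j),
      ∑ y ∈ univ.filter (fun y => f y = k), A x y) = (N j : ℂ) * r j k := by
    intro j k
    rw [Finset.sum_congr rfl fun x hx => hr j k x (by simpa using (Finset.mem_filter.mp hx).2),
      Finset.sum_const, nsmul_eq_mul]
  have hsum_c : ∀ j k, (∑ x ∈ univ.filter (fun x => f x = j),
      ∑ y ∈ univ.filter (fun y => f y = k), A x y) = (N k : ℂ) * c j k := by
    intro j k
    rw [Finset.sum_comm (f := fun x y => A x y)]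
    rw [Finset.sum_congr rfl fun y hy => hc j k y (by simpa using (Finset.mem_filter.mp hy).2),
      Finset.sum_const, nsmul_eq_mul]
  have hrc : ∀ j k, (N j : ℂ) * r j k = (N k : ℂ) * c j k := fun j k => by
    rw [← hsum_r, ← hsum_c]
  -- c j k is a positive real multiple of r j k
  have hcr : ∀ j k, c j k = (((N j : ℝ) / (N k : ℝ) : ℝ) : ℂ) * r j k := by
    intro j k
    have hk : ((N k : ℕ) : ℂ) ≠ 0 := Nat.cast_ne_zero.mpr (hNpos k).ne'
    push_cast
    rw [div_mul_eq_mul_div, eq_div_iff hk]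
    linear_combination (-1 : ℂ) * hrc j k
  -- entry in closed form
  have hentry : ∀ j k, (S.transpose * A * S) j k =
      ((Real.sqrt ((N j : ℝ) / (N k : ℝ)) : ℝ) : ℂ) * r j k := by
    intro j k
    rw [key, hsum_r]
    have hre : (1 / Real.sqrt (N j)) * (1 / Real.sqrt (N k)) * (N j : ℝ)
        = Real.sqrt ((N j : ℝ) / (N k : ℝ)) := by
      rw [Real.sqrt_div (Nat.cast_nonneg _)]
      field_simp [(hsq j).ne', (hsq k).ne']
      linear_combination -Real.mul_self_sqrt (hNpos' j).le
    calc ((1 / Real.sqrt (N j) : ℝ) : ℂ) * ((1 / Real.sqrt (N k) : ℝ) : ℂ)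
          * ((N j : ℂ) * r j k)
        = (((1 / Real.sqrt (N j)) * (1 / Real.sqrt (N k)) * (N j : ℝ) : ℝ) : ℂ) * r j k := by
          push_cast; ring
      _ = ((Real.sqrt ((N j : ℝ) / (N k : ℝ)) : ℝ) : ℂ) * r j k := by rw [hre]
  -- star (r j i) = c i j
  have hsc : ∀ i j, (starRingEnd ℂ) (r j i) = c i j := by
    intro i j
    obtain ⟨y, hy⟩ := hf j
    rw [← hc i j y hy, ← hr j i y hy, map_sum]
    exact Finset.sum_congr rfl fun x _ => hA.apply x y
  refine ⟨?_, ?_⟩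
  · -- Hermitian
    ext i j
    rw [Matrix.conjTranspose_apply, hentry i j, hentry j i, star_mul']
    simp only [RCLike.star_def, Complex.conj_ofReal]
    rw [hsc i j, hcr i j, ← mul_assoc, ← Complex.ofReal_mul,
      sqrt_div_mul_div (hNpos' i) (hNpos' j)]
  · intro j k
    have ht : (0 : ℝ) < (N j : ℝ) / (N k : ℝ) := div_pos (hNpos' j) (hNpos' k)
    have harg : (r j k).arg = (c j k).arg := by
      rw [hcr j k, Complex.arg_real_mul _ ht]
    refine ⟨?_, harg⟩
    have habs : Real.sqrt (‖r j k‖ * ‖c j k‖)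
        = Real.sqrt ((N j : ℝ) / (N k : ℝ)) * ‖r j k‖ := by
      rw [hcr j k, norm_mul, Complex.norm_real, Real.norm_eq_abs, abs_of_pos ht]
      rw [show ‖r j k‖ * (((N j : ℝ) / (N k : ℝ)) * ‖r j k‖)
          = ((N j : ℝ) / (N k : ℝ)) * (‖r j k‖ * ‖r j k‖) by ring]
      rw [Real.sqrt_mul (le_of_lt ht), Real.sqrt_mul_self (norm_nonneg _)]
    rw [hentry, habs]
    push_cast
    rw [mul_comm Complex.I, mul_assoc, Complex.norm_mul_exp_arg_mul_I]
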